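/- Theorem 3.1 (geometric multiplicity one). Let λ ∈ ℂ and suppose f : [0,2π] → ℂ is not identically zero, is absolutely continuous with derivative f′, satisfies f(0) = ρ f(2π), and satisfies i f′(x) + V(x) f(x) + f(2π) k(x) = λ f(x) for almost every x ∈ (0,2π). Then f(2π) ≠ 0; moreover, if f₁ and f₂ are two functions with all these properties, then there exists c ∈ ℂ with f₂ = c f₁ on [0,2π]. -/

import Mathlib

open MeasureTheory Real Complex

/-- `f : [0,2π] → ℂ` is absolutely continuous with derivative `f'`:
`f' ∈ L¹(0,2π)` and `f x = f 0 + ∫₀ˣ f'` for all `x ∈ [0,2π]`. -/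
def IsACWithDeriv (f f' : ℝ → ℂ) : Prop :=
  MeasureTheory.IntegrableOn f' (Set.Ioc 0 (2 * Real.pi)) ∧
    ∀ x ∈ Set.Icc (0:ℝ) (2 * Real.pi), f x = f 0 + ∫ t in (0:ℝ)..x, f' t

/-- `f` (with derivative `f'`) is an eigenfunction of `A_{ρ,k}` for the eigenvalue `λ`. -/
def IsEigenfun (V k : ℝ → ℂ) (ρ lam : ℂ) (f f' : ℝ → ℂ) : Prop :=
  IsACWithDeriv f f' ∧
    (∃ x ∈ Set.Icc (0:ℝ) (2 * Real.pi), f x ≠ 0) ∧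
    f 0 = ρ * f (2 * Real.pi) ∧
    ∀ᵐ x ∂(MeasureTheory.volume.restrict (Set.Ioo 0 (2 * Real.pi))),
      Complex.I * f' x + V x * f x + f (2 * Real.pi) * k x = lam * f x

open MeasureTheory Real Complex Set
open scoped ENNReal NNReal

lemma key_vanish (V : ℝ → ℂ)
    (hV : MeasureTheory.MemLp V ⊤ (MeasureTheory.volume.restrict (Set.Ioo 0 (2 * Real.pi))))
    (lam : ℂ) (g g' : ℝ → ℂ)
    (hint : MeasureTheory.IntegrableOn g' (Set.Ioc 0 (2 * Real.pi)))
    (hrep : ∀ x ∈ Set.Icc (0:ℝ) (2 * Real.pi), g x = ∫ t in (0:ℝ)..x, g' t)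
    (heq : ∀ᵐ x ∂(MeasureTheory.volume.restrict (Set.Ioo 0 (2 * Real.pi))),
      Complex.I * g' x + V x * g x = lam * g x) :
    ∀ x ∈ Set.Icc (0:ℝ) (2 * Real.pi), g x = 0 := by
  have hπ : (0:ℝ) ≤ 2 * Real.pi := by positivity
  set μ := MeasureTheory.volume.restrict (Set.Ioo (0:ℝ) (2 * Real.pi)) with hμ
  set MV : ℝ := (eLpNorm V ⊤ μ).toReal with hMV
  have hVb : ∀ᵐ x ∂μ, ‖V x‖ ≤ MV := by
    filter_upwards [MeasureTheory.ae_le_eLpNormEssSup (f := V) (μ := μ)] with x hx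
    have hfin : eLpNormEssSup V μ ≠ ⊤ := by
      simpa [MeasureTheory.eLpNorm_exponent_top] using hV.2.ne
    have : ((‖V x‖₊ : ℝ≥0∞)).toReal ≤ (eLpNormEssSup V μ).toReal :=
      ENNReal.toReal_mono hfin (by exact_mod_cast hx)
    simpa [hMV, MeasureTheory.eLpNorm_exponent_top] using this
  set M : ℝ := ‖lam‖ + MV with hM
  have hM0 : 0 ≤ M := by
    have : 0 ≤ MV := ENNReal.toReal_nonneg
    have := norm_nonneg lam
    linarith
  have hder : ∀ᵐ x ∂μ, ‖g' x‖ ≤ M * ‖g x‖ := by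
    filter_upwards [heq, hVb] with x hx hVx
    have h1 : Complex.I * g' x = lam * g x - V x * g x := by linear_combination hx
    have h2 : ‖g' x‖ = ‖Complex.I * g' x‖ := by simp
    rw [h2, h1]
    calc ‖lam * g x - V x * g x‖ ≤ ‖lam * g x‖ + ‖V x * g x‖ := norm_sub_le _ _
      _ = ‖lam‖ * ‖g x‖ + ‖V x‖ * ‖g x‖ := by simp [norm_mul]
      _ ≤ M * ‖g x‖ := by nlinarith [norm_nonneg (g x)]
  -- interval integrability of g'
  have hii : ∀ x ∈ Set.Icc (0:ℝ) (2 * Real.pi), IntervalIntegrable g' volume 0 x := by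
    intro x hx
    rw [intervalIntegrable_iff_integrableOn_Ioc_of_le hx.1]
    exact hint.mono_set (Set.Ioc_subset_Ioc le_rfl hx.2)
  set S : ℝ := ∫ t in (0:ℝ)..(2 * Real.pi), ‖g' t‖ with hS
  -- transporting the a.e. bound to restrict (Icc 0 x)
  have haeIcc : ∀ x ∈ Set.Icc (0:ℝ) (2 * Real.pi),
      ∀ᵐ t ∂(MeasureTheory.volume.restrict (Set.Icc (0:ℝ) x)),
        ‖g' t‖ ≤ M * ‖g t‖ ∧ t ∈ Set.Icc (0:ℝ) (2 * Real.pi) := by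
    intro x hx
    have hsub : Set.Ioo (0:ℝ) x ⊆ Set.Ioo 0 (2 * Real.pi) :=
      Set.Ioo_subset_Ioo le_rfl hx.2
    have hres : MeasureTheory.volume.restrict (Set.Icc (0:ℝ) x)
        = MeasureTheory.volume.restrict (Set.Ioo (0:ℝ) x) :=
      (MeasureTheory.Measure.restrict_congr_set MeasureTheory.Ioo_ae_eq_Icc).symm
    rw [hres]
    have h1 : ∀ᵐ t ∂(MeasureTheory.volume.restrict (Set.Ioo (0:ℝ) x)), ‖g' t‖ ≤ M * ‖g t‖ :=
      MeasureTheory.ae_restrict_of_ae_restrict_of_subset hsub hder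
    have h2 : ∀ᵐ t ∂(MeasureTheory.volume.restrict (Set.Ioo (0:ℝ) x)), t ∈ Set.Ioo (0:ℝ) x :=
      MeasureTheory.ae_restrict_mem measurableSet_Ioo
    filter_upwards [h1, h2] with t ht1 ht2
    exact ⟨ht1, ⟨ht2.1.le, ht2.2.le.trans hx.2⟩⟩
  -- main induction
  have main : ∀ n : ℕ, ∀ x ∈ Set.Icc (0:ℝ) (2 * Real.pi),
      ‖g x‖ ≤ S * (M * x) ^ n / n.factorial := by
    intro n
    induction n with
    | zero =>
      intro x hx
      have h1 : ‖g x‖ ≤ ∫ t in (0:ℝ)..x, ‖g' t‖ := by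
        rw [hrep x hx]
        exact intervalIntegral.norm_integral_le_integral_norm hx.1
      have h2 : (∫ t in (0:ℝ)..x, ‖g' t‖) ≤ S := by
        rw [hS, intervalIntegral.integral_of_le hx.1, intervalIntegral.integral_of_le hπ]
        refine MeasureTheory.setIntegral_mono_set
          ((intervalIntegrable_iff_integrableOn_Ioc_of_le hπ).mp
            ((hii _ (Set.right_mem_Icc.mpr hπ))).norm) ?_
          (Set.Ioc_subset_Ioc le_rfl hx.2).eventuallyLE
        filter_upwards with t using norm_nonneg _
      simpa using h1.trans h2
    | succ n ih =>
      intro x hx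
      have h1 : ‖g x‖ ≤ ∫ t in (0:ℝ)..x, ‖g' t‖ := by
        rw [hrep x hx]
        exact intervalIntegral.norm_integral_le_integral_norm hx.1
      have h2 : (∫ t in (0:ℝ)..x, ‖g' t‖)
          ≤ ∫ t in (0:ℝ)..x, M * (S * (M * t) ^ n / n.factorial) := by
        refine intervalIntegral.integral_mono_ae_restrict hx.1
          ((hii x hx).norm) (Continuous.intervalIntegrable (by fun_prop) _ _) ?_
        filter_upwards [haeIcc x hx] with t ht
        calc ‖g' t‖ ≤ M * ‖g t‖ := ht.1
          _ ≤ M * (S * (M * t) ^ n / n.factorial) :=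
            mul_le_mul_of_nonneg_left (ih t ht.2) hM0
      have h3 : (∫ t in (0:ℝ)..x, M * (S * (M * t) ^ n / n.factorial))
          = S * (M * x) ^ (n + 1) / (n + 1).factorial := by
        have hn : (n.factorial : ℝ) ≠ 0 := Nat.cast_ne_zero.mpr n.factorial_ne_zero
        simp only [mul_pow]
        have : ∀ t : ℝ, M * (S * (M ^ n * t ^ n) / n.factorial)
            = (M * S * M ^ n / n.factorial) * t ^ n := by intro t; ring
        simp only [this]
        rw [intervalIntegral.integral_const_mul, integral_pow]
        rw [Nat.factorial_succ]
        push_cast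
        field_simp
        ring
      rw [← h3]; exact h1.trans h2
  intro x hx
  have hlim : Filter.Tendsto (fun n : ℕ => S * (M * x) ^ n / n.factorial)
      Filter.atTop (nhds 0) := by
    have := (FloorSemiring.tendsto_pow_div_factorial_atTop (K := ℝ) (M * x)).const_mul S
    simpa [mul_div_assoc] using this
  have : ‖g x‖ ≤ 0 :=
    ge_of_tendsto hlim (Filter.Eventually.of_forall fun n => main n x hx)
  simpa using le_antisymm this (norm_nonneg _)

/-- Theorem 3.1 (geometric multiplicity one): every eigenfunction of `A_{ρ,k}` satisfies
`f(2π) ≠ 0`, and any two eigenfunctions for the same eigenvalue are proportional on `[0,2π]`. -/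
theorem geometric_multiplicity_one
    (V k : ℝ → ℂ)
    (hV : MeasureTheory.MemLp V ⊤ (MeasureTheory.volume.restrict (Set.Ioo 0 (2 * Real.pi))))
    (hk : MeasureTheory.MemLp k 2 (MeasureTheory.volume.restrict (Set.Ioo 0 (2 * Real.pi))))
    (ρ : ℂ) (lam : ℂ) :
    (∀ f f' : ℝ → ℂ, IsEigenfun V k ρ lam f f' → f (2 * Real.pi) ≠ 0) ∧
    (∀ f₁ f₁' f₂ f₂' : ℝ → ℂ, IsEigenfun V k ρ lam f₁ f₁' → IsEigenfun V k ρ lam f₂ f₂' →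
      ∃ c : ℂ, ∀ x ∈ Set.Icc (0:ℝ) (2 * Real.pi), f₂ x = c * f₁ x) := by
  have part1 : ∀ f f' : ℝ → ℂ, IsEigenfun V k ρ lam f f' → f (2 * Real.pi) ≠ 0 := by
    intro f f' hf hzero
    obtain ⟨⟨hint, hrep⟩, ⟨x₀, hx₀, hx₀ne⟩, hbc, heq⟩ := hf
    have hrep' : ∀ x ∈ Set.Icc (0:ℝ) (2 * Real.pi), f x = ∫ t in (0:ℝ)..x, f' t := by
      intro x hx
      have h0 : f 0 = 0 := by rw [hbc, hzero, mul_zero]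
      rw [hrep x hx, h0, zero_add]
    have heq' : ∀ᵐ x ∂(MeasureTheory.volume.restrict (Set.Ioo 0 (2 * Real.pi))),
        Complex.I * f' x + V x * f x = lam * f x := by
      filter_upwards [heq] with t ht
      rw [hzero] at ht
      linear_combination ht
    exact hx₀ne (key_vanish V hV lam f f' hint hrep' heq' x₀ hx₀)
  refine ⟨part1, ?_⟩
  intro f₁ f₁' f₂ f₂' h1 h2
  have h1n := part1 f₁ f₁' h1
  set c : ℂ := f₂ (2 * Real.pi) / f₁ (2 * Real.pi) with hcdef
  have hcf : c * f₁ (2 * Real.pi) = f₂ (2 * Real.pi) := div_mul_cancel₀ _ h1n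
  obtain ⟨⟨hint1, hrep1⟩, _, hbc1, heq1⟩ := h1
  obtain ⟨⟨hint2, hrep2⟩, _, hbc2, heq2⟩ := h2
  set g : ℝ → ℂ := fun x => f₂ x - c * f₁ x with hgdef
  set g' : ℝ → ℂ := fun x => f₂' x - c * f₁' x with hg'def
  have hintg : MeasureTheory.IntegrableOn g' (Set.Ioc 0 (2 * Real.pi)) := by
    exact hint2.sub (hint1.const_mul c)
  have hrepg : ∀ x ∈ Set.Icc (0:ℝ) (2 * Real.pi), g x = ∫ t in (0:ℝ)..x, g' t := by
    intro x hx
    have i1 : IntervalIntegrable f₁' MeasureTheory.volume 0 x := by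
      rw [intervalIntegrable_iff_integrableOn_Ioc_of_le hx.1]
      exact hint1.mono_set (Set.Ioc_subset_Ioc le_rfl hx.2)
    have i2 : IntervalIntegrable f₂' MeasureTheory.volume 0 x := by
      rw [intervalIntegrable_iff_integrableOn_Ioc_of_le hx.1]
      exact hint2.mono_set (Set.Ioc_subset_Ioc le_rfl hx.2)
    have e1 := hrep1 x hx
    have e2 := hrep2 x hx
    show f₂ x - c * f₁ x = ∫ t in (0:ℝ)..x, (f₂' t - c * f₁' t)
    rw [intervalIntegral.integral_sub i2 (i1.const_mul c),
      intervalIntegral.integral_const_mul, e1, e2, hbc1, hbc2]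
    linear_combination (-ρ) * hcf
  have heqg : ∀ᵐ x ∂(MeasureTheory.volume.restrict (Set.Ioo 0 (2 * Real.pi))),
      Complex.I * g' x + V x * g x = lam * g x := by
    filter_upwards [heq1, heq2] with t h1t h2t
    show Complex.I * (f₂' t - c * f₁' t) + V t * (f₂ t - c * f₁ t) = lam * (f₂ t - c * f₁ t)
    linear_combination h2t - c * h1t + k t * hcf
  have hg := key_vanish V hV lam g g' hintg hrepg heqg
  refine ⟨c, fun x hx => ?_⟩
  have hx0 : f₂ x - c * f₁ x = 0 := hg x hx
  linear_combination hx0
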